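/- Let α be a complex number with |α| < 1 and let C : ℕ → ℂ satisfy the single-mode squeezing recurrence (C 1 = 0 and √(n+1) · C (n+1) = α · √n · C (n-1) for all n ≥ 1), together with the normalization Σₙ |C n|² = 1 and the phase convention that C 0 is a positive real number. Then C is uniquely determined: C (2n) = (1 − |α|²)^(1/4) · α^n · √((2n-1)‼/(2n)‼) and C (2n+1) = 0 for all n ≥ 0. -/

import Mathlib

open Set


noncomputable def dfRatio (n : ℕ) : ℝ :=
  (Nat.doubleFactorial (2 * n - 1) : ℝ) / (Nat.doubleFactorial (2 * n) : ℝ)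

lemma dfRatio_pos (n : ℕ) : 0 < dfRatio n := by
  unfold dfRatio
  apply div_pos <;> exact_mod_cast Nat.doubleFactorial_pos _

lemma dfRatio_zero : dfRatio 0 = 1 := by simp [dfRatio, Nat.doubleFactorial]

lemma dfRatio_succ (n : ℕ) :
    dfRatio (n + 1) = dfRatio n * ((2 * n + 1) / (2 * n + 2)) := by
  unfold dfRatio
  have h1 : 2 * (n + 1) - 1 = 2 * n + 1 := by omega
  have h2 : 2 * (n + 1) = 2 * n + 2 := by ring
  rw [h1, h2]
  have h3 : Nat.doubleFactorial (2 * n + 1) = (2 * n + 1) * Nat.doubleFactorial (2 * n - 1) := by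
    cases n with
    | zero => rfl
    | succ m =>
      have e : 2 * (m + 1) + 1 = (2 * m + 1) + 2 := by ring
      have e2 : 2 * (m + 1) - 1 = 2 * m + 1 := by omega
      rw [e, Nat.doubleFactorial_add_two, e2]
  rw [h3, Nat.doubleFactorial_add_two]
  have hd : (Nat.doubleFactorial (2 * n) : ℝ) ≠ 0 := by
    exact_mod_cast (Nat.doubleFactorial_pos _).ne'
  have hd2 : ((2 * n : ℕ) : ℝ) + 2 ≠ 0 := by positivity
  push_cast
  field_simp

lemma dfRatio_le_one (n : ℕ) : dfRatio n ≤ 1 := by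
  induction n with
  | zero => simp [dfRatio_zero]
  | succ m ih =>
    rw [dfRatio_succ]
    have h : ((2 * m + 1 : ℝ)) / (2 * m + 2) ≤ 1 := by
      rw [div_le_one (by positivity)]; linarith
    calc dfRatio m * ((2 * m + 1) / (2 * m + 2)) ≤ dfRatio m * 1 :=
          mul_le_mul_of_nonneg_left h (dfRatio_pos m).le
      _ ≤ 1 := by simpa using ih

lemma dfRatio_summable {y : ℝ} (hy : |y| < 1) :
    Summable (fun n => dfRatio n * y ^ n) := by
  apply Summable.of_norm_bounded (summable_geometric_of_lt_one (abs_nonneg y) hy)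
  intro n
  rw [Real.norm_eq_abs, abs_mul, abs_pow]
  calc |dfRatio n| * |y| ^ n ≤ 1 * |y| ^ n := by
        apply mul_le_mul_of_nonneg_right _ (by positivity)
        rw [abs_of_pos (dfRatio_pos n)]; exact dfRatio_le_one n
    _ = |y| ^ n := one_mul _

lemma dfRatio_hasSum {t : ℝ} (h0 : 0 ≤ t) (h1 : t < 1) :
    HasSum (fun n => dfRatio n * t ^ n) (1 / Real.sqrt (1 - t)) := by
  set r : ℝ := (1 + t) / 2 with hr
  have hr0 : 0 < r := by positivity
  have hr1 : r < 1 := by rw [hr]; linarith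
  have htr : t < r := by rw [hr]; linarith
  set s : Set ℝ := Ioo (-r) r with hs
  -- summable bound for derivatives
  set u : ℕ → ℝ := fun n => (n : ℝ) * r ^ (n - 1) with hu
  have hu_sum : Summable u := by
    rw [← summable_nat_add_iff 1]
    have : (fun n => u (n + 1)) = fun n : ℕ => ((n : ℝ) + 1) * r ^ n := by
      funext n; simp only [hu, Nat.add_sub_cancel]; push_cast; ring
    rw [this]
    have h1s : Summable fun n : ℕ => (n : ℝ) * r ^ n := by
      simpa using summable_pow_mul_geometric_of_norm_lt_one 1
        (r := r) (by rw [Real.norm_eq_abs, abs_of_pos hr0]; exact hr1)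
    have h2s : Summable fun n : ℕ => r ^ n :=
      summable_geometric_of_lt_one hr0.le hr1
    simpa [add_mul] using h1s.add h2s
  have hderiv : ∀ n (y : ℝ), y ∈ s →
      HasDerivAt (fun x => dfRatio n * x ^ n) (dfRatio n * ((n : ℝ) * y ^ (n - 1))) y := by
    intro n y _
    exact (hasDerivAt_pow n y).const_mul (dfRatio n)
  have hbound : ∀ n (y : ℝ), y ∈ s → ‖dfRatio n * ((n : ℝ) * y ^ (n - 1))‖ ≤ u n := by
    intro n y hy
    have hyr : |y| ≤ r := by
      rw [abs_le]; exact ⟨hy.1.le, hy.2.le⟩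
    rw [Real.norm_eq_abs, abs_mul, abs_mul, abs_pow]
    rw [abs_of_pos (dfRatio_pos n), abs_of_nonneg (Nat.cast_nonneg n)]
    calc dfRatio n * ((n : ℝ) * |y| ^ (n - 1)) ≤ 1 * ((n : ℝ) * r ^ (n - 1)) := by
          apply mul_le_mul (dfRatio_le_one n)
          · exact mul_le_mul_of_nonneg_left (pow_le_pow_left₀ (abs_nonneg y) hyr _)
              (Nat.cast_nonneg n)
          · positivity
          · norm_num
      _ = u n := one_mul _
  have h0mem : (0 : ℝ) ∈ s := ⟨by linarith, hr0⟩
  have hsum0 : Summable fun n => dfRatio n * (0 : ℝ) ^ n :=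
    dfRatio_summable (by simpa using hr0.trans_le le_rfl |>.le.trans_lt (by norm_num : (0:ℝ) < 1))
  -- the sum function and derivative function
  set F : ℝ → ℝ := fun x => ∑' n, dfRatio n * x ^ n with hF
  set D : ℝ → ℝ := fun x => ∑' n, dfRatio n * ((n : ℝ) * x ^ (n - 1)) with hD
  have hFderiv : ∀ y ∈ s, HasDerivAt F (D y) y := by
    intro y hy
    exact hasDerivAt_tsum_of_isPreconnected hu_sum isOpen_Ioo
      (isPreconnected_Ioo) hderiv hbound h0mem hsum0 hy
  have habs : ∀ y ∈ s, |y| < 1 := by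
    intro y hy
    rw [abs_lt]; constructor <;> [linarith [hy.1]; linarith [hy.2]]
  have hFsum : ∀ y ∈ s, HasSum (fun n => dfRatio n * y ^ n) (F y) := by
    intro y hy
    exact (dfRatio_summable (habs y hy)).hasSum
  have hDsum : ∀ y ∈ s, HasSum (fun n => dfRatio n * ((n : ℝ) * y ^ (n - 1))) (D y) := by
    intro y hy
    apply Summable.hasSum
    apply Summable.of_norm_bounded hu_sum
    intro n; exact hbound n y hy
  -- key identity: (1 - y) * D y = F y / 2
  have hkey : ∀ y ∈ s, (1 - y) * D y = F y / 2 := by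
    intro y hy
    have hS := hDsum y hy
    have hshift : HasSum (fun n => dfRatio (n + 1) * (((n : ℝ) + 1) * y ^ n)) (D y) := by
      have h0 : dfRatio 0 * ((0 : ℕ) * y ^ (0 - 1)) = 0 := by simp
      have hS' : HasSum (fun n => dfRatio n * ((n : ℝ) * y ^ (n - 1)))
          (D y + ∑ i ∈ Finset.range 1, dfRatio i * ((i : ℝ) * y ^ (i - 1))) := by
        simpa using hS
      have h2 := (hasSum_nat_add_iff 1).mpr hS'
      have heq : (fun n : ℕ => dfRatio (n + 1) * (((n : ℝ) + 1) * y ^ n))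
          = fun n : ℕ => dfRatio (n + 1) * ((↑(n + 1) : ℝ) * y ^ (n + 1 - 1)) := by
        funext n; rw [Nat.add_sub_cancel]; push_cast; ring
      rw [heq]; exact h2
    -- rewrite shifted terms via recurrence
    have hterm : ∀ n : ℕ, dfRatio (n + 1) * (((n : ℝ) + 1) * y ^ n)
        = dfRatio n * y ^ n * n + dfRatio n * y ^ n / 2 := by
      intro n
      rw [dfRatio_succ]
      have : ((2 : ℝ) * n + 2) ≠ 0 := by positivity
      field_simp
    have hsplit : HasSum (fun n => dfRatio n * y ^ n * n + dfRatio n * y ^ n / 2) (D y) := by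
      simpa only [hterm] using hshift
    have hhalf : HasSum (fun n => dfRatio n * y ^ n / 2) (F y / 2) :=
      (hFsum y hy).div_const 2
    have hmain : HasSum (fun n => dfRatio n * y ^ n * n) (D y - F y / 2) := by
      have := hsplit.sub hhalf
      simpa using this
    -- also y * D y has the same sum
    have hyD : HasSum (fun n => dfRatio n * y ^ n * n) (y * D y) := by
      have h3 := hS.mul_left y
      have heq : (fun n : ℕ => y * (dfRatio n * ((n : ℝ) * y ^ (n - 1))))
          = fun n : ℕ => dfRatio n * y ^ n * n := by
        funext n
        cases n with
        | zero => simp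
        | succ m => rw [Nat.add_sub_cancel, pow_succ]; push_cast; ring
      rwa [heq] at h3
    have := hmain.unique hyD
    linarith [this]
  -- G = F * sqrt(1 - ·) has zero derivative on [0, t]
  set G : ℝ → ℝ := fun x => F x * Real.sqrt (1 - x) with hG
  have hsub : Icc (0 : ℝ) t ⊆ s := by
    intro x hx
    exact ⟨by linarith [hx.1], by linarith [hx.2]⟩
  have hGderiv : ∀ x ∈ Icc (0 : ℝ) t, HasDerivAt G 0 x := by
    intro x hx
    have hxs := hsub hx
    have hx1 : x < 1 := lt_of_le_of_lt hx.2 h1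
    have h1x : (0 : ℝ) < 1 - x := by linarith
    have hsq : HasDerivAt (fun y : ℝ => Real.sqrt (1 - y))
        (1 / (2 * Real.sqrt (1 - x)) * (-1)) x := by
      have hinner : HasDerivAt (fun y : ℝ => 1 - y) (-1) x := by
        simpa using (hasDerivAt_id x).const_sub 1
      exact (Real.hasDerivAt_sqrt h1x.ne').comp x hinner
    have hprod := (hFderiv x hxs).mul hsq
    refine hprod.congr_deriv ?_
    symm
    have hs0 : Real.sqrt (1 - x) > 0 := Real.sqrt_pos.mpr h1x
    have hs2 : Real.sqrt (1 - x) ^ 2 = 1 - x := Real.sq_sqrt h1x.le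
    have hk := hkey x hxs
    have hrw : F x = 2 * ((1 - x) * D x) := by linarith [hk]
    rw [hrw]
    field_simp
    linear_combination (-D x) * hs2
  have hGcont : ContinuousOn G (Icc (0 : ℝ) t) := fun x hx =>
    ((hGderiv x hx).continuousAt).continuousWithinAt
  have hconst := constant_of_has_deriv_right_zero hGcont
    (fun x hx => ((hGderiv x (Ico_subset_Icc_self hx)).hasDerivWithinAt))
  have hGt : G t = G 0 := hconst t (right_mem_Icc.mpr h0)
  have hF0 : F 0 = 1 := by
    have hone : HasSum (fun n => dfRatio n * (0 : ℝ) ^ n) 1 := by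
      have hsingle := hasSum_single (f := fun n => dfRatio n * (0 : ℝ) ^ n) 0
        (by intro n hn
            cases n with
            | zero => exact absurd rfl hn
            | succ m => simp)
      simpa [dfRatio_zero] using hsingle
    exact (hFsum 0 h0mem).unique hone
  have hG0 : G 0 = 1 := by simp [hG, hF0]
  have hts : t ∈ s := ⟨by linarith, htr⟩
  have hsqt : Real.sqrt (1 - t) > 0 := Real.sqrt_pos.mpr (by linarith)
  have hFt : F t = 1 / Real.sqrt (1 - t) := by
    have h11 : F t * Real.sqrt (1 - t) = 1 := hGt.trans hG0
    field_simp
    linarith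
  have := hFsum t hts
  rwa [hFt] at this


lemma sqrt_cast_ne (n : ℕ) : ((Real.sqrt ((n : ℝ) + 1) : ℝ) : ℂ) ≠ 0 := by
  have : (0 : ℝ) < Real.sqrt ((n : ℝ) + 1) := Real.sqrt_pos.mpr (by positivity)
  exact_mod_cast this.ne'

/-- Uniqueness of the normalized single-mode squeezed vacuum: the recurrence,
normalization, and phase convention determine
`C (2n) = (1-|α|²)^(1/4) αⁿ √((2n-1)‼/(2n)‼)` and `C (2n+1) = 0`. -/
theorem squeezed_vacuum_unique (α : ℂ) (hα : ‖α‖ < 1) (C : ℕ → ℂ)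
    (h1 : C 1 = 0)
    (hrec : ∀ n : ℕ, 1 ≤ n →
      (Real.sqrt (n + 1) : ℂ) * C (n + 1) = α * (Real.sqrt n : ℂ) * C (n - 1))
    (hnorm : HasSum (fun n : ℕ => ‖C n‖ ^ 2) 1)
    (hphase : ∃ r : ℝ, 0 < r ∧ C 0 = (r : ℂ)) :
    (∀ n : ℕ, C (2 * n) =
      (((1 - ‖α‖ ^ 2) ^ ((1 : ℝ) / 4) : ℝ) : ℂ) * α ^ n *
        (Real.sqrt ((Nat.doubleFactorial (2 * n - 1) : ℝ) /
          (Nat.doubleFactorial (2 * n) : ℝ)) : ℂ)) ∧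
    (∀ n : ℕ, C (2 * n + 1) = 0) := by
  obtain ⟨r, hr0, hC0⟩ := hphase
  -- odd coefficients vanish
  have codd : ∀ k : ℕ, C (2 * k + 1) = 0 := by
    intro k
    induction k with
    | zero => simpa using h1
    | succ m ih =>
      have h := hrec (2 * m + 2) (by omega)
      have e1 : 2 * m + 2 + 1 = 2 * (m + 1) + 1 := by ring
      have e2 : 2 * m + 2 - 1 = 2 * m + 1 := by omega
      rw [e1, e2, ih, mul_zero] at h
      have hne := sqrt_cast_ne (2 * m + 2)
      exact (mul_eq_zero.mp h).resolve_left hne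
  -- even coefficients
  have ceven : ∀ k : ℕ, C (2 * k) = (r : ℂ) * α ^ k * (Real.sqrt (dfRatio k) : ℂ) := by
    intro k
    induction k with
    | zero => simp [hC0, dfRatio_zero]
    | succ m ih =>
      have h := hrec (2 * m + 1) (by omega)
      have e1 : 2 * m + 1 + 1 = 2 * (m + 1) := by ring
      have e2 : 2 * m + 1 - 1 = 2 * m := by omega
      rw [e1, e2, ih] at h
      -- real identity
      have hm2 : (0 : ℝ) < (2 * m + 1 : ℕ) + 1 := by positivity
      have hreal : Real.sqrt (((2 * m + 1 : ℕ) : ℝ) + 1) * Real.sqrt (dfRatio (m + 1))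
          = Real.sqrt ((2 * m + 1 : ℕ)) * Real.sqrt (dfRatio m) := by
        rw [dfRatio_succ, ← Real.sqrt_mul (by positivity), ← Real.sqrt_mul (by positivity)]
        congr 1
        have hne : ((2 : ℝ) * m + 2) ≠ 0 := by positivity
        push_cast
        field_simp
        ring
      have hne := sqrt_cast_ne (2 * m + 1)
      apply mul_left_cancel₀ hne
      rw [h]
      have : ((Real.sqrt (((2 * m + 1 : ℕ) : ℝ) + 1) : ℝ) : ℂ) * ((r : ℂ) * α ^ (m + 1) * (Real.sqrt (dfRatio (m + 1)) : ℂ))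
          = ((Real.sqrt (((2 * m + 1 : ℕ) : ℝ) + 1) * Real.sqrt (dfRatio (m + 1)) : ℝ) : ℂ) * ((r : ℂ) * α ^ (m + 1)) := by
        push_cast; ring
      rw [this, hreal]
      push_cast
      ring
  -- moduli
  set t : ℝ := ‖α‖ ^ 2 with ht
  have ht0 : 0 ≤ t := by positivity
  have ht1 : t < 1 := by
    have := norm_nonneg α
    nlinarith
  have habs2k : ∀ k : ℕ, ‖C (2 * k)‖ ^ 2 = r ^ 2 * (dfRatio k * t ^ k) := by
    intro k
    rw [ceven k]
    rw [norm_mul, norm_mul, Complex.norm_real, Complex.norm_real, norm_pow, Real.norm_eq_abs, Real.norm_eq_abs]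
    rw [abs_of_pos hr0, abs_of_nonneg (Real.sqrt_nonneg _)]
    rw [mul_pow, mul_pow, Real.sq_sqrt (dfRatio_pos k).le, ht]
    rw [← pow_mul, ← pow_mul]
    ring
  -- extract even part of the sum
  have heven : HasSum (fun k : ℕ => ‖C (2 * k)‖ ^ 2) 1 := by
    have hinj : Function.Injective (fun k : ℕ => 2 * k) := fun a b hab => by
      dsimp at hab; omega
    have hvan : ∀ m ∉ Set.range (fun k : ℕ => 2 * k), ‖C m‖ ^ 2 = 0 := by
      intro m hm
      rcases Nat.even_or_odd m with he | ho
      · obtain ⟨j, hj⟩ := he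
        exact absurd ⟨j, by dsimp; omega⟩ hm
      · obtain ⟨j, hj⟩ := ho
        rw [show m = 2 * j + 1 by omega, codd j]
        simp
    exact (Function.Injective.hasSum_iff hinj hvan).mpr hnorm
  have heven' : HasSum (fun k : ℕ => r ^ 2 * (dfRatio k * t ^ k)) 1 := by
    have : (fun k : ℕ => ‖C (2 * k)‖ ^ 2) = fun k => r ^ 2 * (dfRatio k * t ^ k) := by
      funext k; exact habs2k k
    rwa [this] at heven
  have hkey := (dfRatio_hasSum ht0 ht1).mul_left (r ^ 2)
  have hval : r ^ 2 * (1 / Real.sqrt (1 - t)) = 1 := hkey.unique heven'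
  have h1t : (0 : ℝ) < 1 - t := by linarith
  have hsqt : (0 : ℝ) < Real.sqrt (1 - t) := Real.sqrt_pos.mpr h1t
  have hr2 : r ^ 2 = Real.sqrt (1 - t) := by
    field_simp at hval
    linarith
  have hrval : ((1 - ‖α‖ ^ 2) ^ ((1 : ℝ) / 4) : ℝ) = r := by
    rw [← ht]
    have h4 : (1 - t) ^ ((1 : ℝ) / 4) = Real.sqrt (Real.sqrt (1 - t)) := by
      rw [Real.sqrt_eq_rpow, Real.sqrt_eq_rpow]
      rw [← Real.rpow_mul h1t.le]
      norm_num
    rw [h4, ← hr2, Real.sqrt_sq hr0.le]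
  constructor
  · intro n
    have := ceven n
    rw [hrval]
    simpa [dfRatio] using this
  · exact codd
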